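/- Let A, B be arrays of length n with nonnegative integer entries, let α > 0, and define scaled arrays A'[i] = ⌊A[i]/m⌋ and B'[i] = ⌊B[i]/m⌋ for a positive integer m. Let C and C' denote the min-plus convolutions of (A,B) and (A',B') respectively. If A[i] + B[j] = C[i+j], then A'[i] + B'[j] = C'[i+j] + b for some b ∈ {0,1}. -/
import Mathlib


/-- If `A[i] + B[j] = C[i+j]` for the min-plus convolution `C` of `A, B`,
then for the floor-scaled arrays `A', B'` with min-plus convolution `C'`, we have
`A'[i] + B'[j] = C'[i+j] + b` for some `b ∈ {0,1}`. -/
theorem scaled_witness (n m : ℕ) (hn : 0 < n) (hm : 0 < m)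
    (A B A' B' : ℕ → ℕ)
    (hA' : ∀ i, A' i = A i / m) (hB' : ∀ i, B' i = B i / m)
    (C C' : ℕ → ℕ)
    (hC : ∀ k, k ≤ 2 * n - 2 →
      IsLeast {v : ℕ | ∃ i j, i < n ∧ j < n ∧ i + j = k ∧ v = A i + B j} (C k))
    (hC' : ∀ k, k ≤ 2 * n - 2 →
      IsLeast {v : ℕ | ∃ i j, i < n ∧ j < n ∧ i + j = k ∧ v = A' i + B' j} (C' k))
    (i j : ℕ) (hi : i < n) (hj : j < n)
    (h : A i + B j = C (i + j)) :
    ∃ b : ℕ, (b = 0 ∨ b = 1) ∧ A' i + B' j = C' (i + j) + b := by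
  have hk : i + j ≤ 2 * n - 2 := by omega
  obtain ⟨⟨i', j', hi', hj', hij', hval'⟩, hlb'⟩ := hC' (i + j) hk
  obtain ⟨_, hlb⟩ := hC (i + j) hk
  -- C (i+j) ≤ A i' + B j'
  have h1 : A i + B j ≤ A i' + B j' := by
    rw [h]; exact hlb ⟨i', j', hi', hj', hij', rfl⟩
  -- C' (i+j) ≤ A' i + B' j
  have h2 : C' (i + j) ≤ A' i + B' j :=
    hlb' ⟨i, j, hi, hj, rfl, rfl⟩
  have h3 : A' i + B' j ≤ C' (i + j) + 1 := by
    rw [hval', hA', hB', hA', hB']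
    have e1 : A i / m + B j / m ≤ (A i + B j) / m := Nat.add_div_le_add_div _ _ _
    have e2 : (A i + B j) / m ≤ (A i' + B j') / m := Nat.div_le_div_right h1
    have e3 : (A i' + B j') / m ≤ A i' / m + B j' / m + 1 := by
      rw [Nat.add_div hm]; split <;> omega
    omega
  exact ⟨A' i + B' j - C' (i + j), by omega, by omega⟩
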